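/- arXiv:1602.00830 — 2 statements merged into one kernel-verified Lean document; each statement's English description precedes it below -/
import Mathlib

section
/- Let A₁ (size M×M₁), B₁ (M₁×M), A₂ (M×M₂), B₂ (M₂×M) be continuous matrix-valued functions on [0,1]². Then the composition (A₁⟨B₁·⟩₁) ∘ (A₂⟨B₂·⟩₂) of the two bounded operators u ↦ A₁⟨B₁u⟩₁ and u ↦ A₂⟨B₂u⟩₂ on H = L²([0,1]², ℂ^M) equals the integral operator u ↦ ∫_{[0,1]²} D(k,k') u(k') dk' with the continuous M×M matrix kernel D(k,k') = A₁(k) B₁(k₁',k₂) A₂(k₁',k₂) B₂(k'), where k = (k₁,k₂) and k' = (k₁',k₂'); in particular this composition is a compact operator on H. -/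
open MeasureTheory Set

noncomputable section

/-- The unit interval `[0,1]` equipped with Lebesgue measure. -/
abbrev I01 : Set ℝ := Set.Icc 0 1

/-- The unit square `[0,1]²`. -/
abbrev Box : Type := I01 × I01

/-- The space `ℂ^M`. -/
abbrev EucM (M : ℕ) := EuclideanSpace ℂ (Fin M)

/-- The Hilbert space `H = L²([0,1]², ℂ^M)`. -/
abbrev HS (M : ℕ) := Lp (E := EucM M) 2 (volume : Measure Box)

/-- Reinterpret a plain vector in `Fin M → ℂ` as an element of `ℂ^M` (the identity map). -/
abbrev toEuc (M : ℕ) (x : Fin M → ℂ) : EucM M := (WithLp.equiv 2 (Fin M → ℂ)).symm x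

/-- matrix as CLM between Euclidean spaces, as a linear map in the matrix -/
def mvEL (m n : ℕ) : Matrix (Fin m) (Fin n) ℂ →ₗ[ℂ] (EucM n →L[ℂ] EucM m) :=
  (LinearMap.toContinuousLinearMap.toLinearMap).comp (Matrix.toEuclideanLin.toLinearMap)

lemma continuous_mvEL (m n : ℕ) : Continuous (mvEL m n) :=
  LinearMap.continuous_of_finiteDimensional _

lemma mvEL_apply (m n : ℕ) (A : Matrix (Fin m) (Fin n) ℂ) (v : EucM n) :
    mvEL m n A v = toEuc m (A.mulVec v) := rfl

lemma mvEL_mul {m n p : ℕ} (A : Matrix (Fin m) (Fin n) ℂ) (B : Matrix (Fin n) (Fin p) ℂ)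
    (v : EucM p) : mvEL m n A (mvEL n p B v) = mvEL m p (A * B) v := by
  show toEuc m (A.mulVec (B.mulVec v)) = toEuc m ((A * B).mulVec v)
  rw [Matrix.mulVec_mulVec]

set_option synthInstance.maxHeartbeats 1000000 in
lemma dummy_sc (n m : ℕ) : SecondCountableTopology (EucM n →L[ℂ] EucM m) := inferInstance

lemma integral_euc_eq {α : Type*} [MeasurableSpace α] (μ : Measure α) (n : ℕ)
    (f : α → (Fin n → ℂ)) :
    (∫ a, toEuc n (f a) ∂μ : EucM n) = toEuc n (∫ a, f a ∂μ) :=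
  ContinuousLinearEquiv.integral_comp_comm
    (PiLp.continuousLinearEquiv 2 ℂ (fun _ : Fin n => ℂ)).symm f

lemma exists_bound {α : Type*} [TopologicalSpace α] [CompactSpace α] [Nonempty α]
    {f : α → ℝ} (hf : Continuous f) : ∃ C, 0 ≤ C ∧ ∀ a, f a ≤ C := by
  obtain ⟨C, hC⟩ := (isCompact_range hf).bddAbove
  exact ⟨max C 0, le_max_right _ _, fun a => le_trans (hC (mem_range_self a)) (le_max_left _ _)⟩

lemma integrable_clm_apply {α : Type*} [MeasurableSpace α] [TopologicalSpace α]
    [OpensMeasurableSpace α] {μ : Measure α} {n m : ℕ}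
    {ψ : α → (EucM n →L[ℂ] EucM m)} (hψ : Continuous ψ) {C : ℝ} (hC : ∀ a, ‖ψ a‖ ≤ C)
    {f : α → EucM n} (hf : Integrable f μ) : Integrable (fun a => ψ a (f a)) μ := by
  haveI : SecondCountableTopology (EucM n →L[ℂ] EucM m) := dummy_sc n m
  have hm : AEStronglyMeasurable (fun a => ψ a (f a)) μ :=
    (ContinuousLinearMap.id ℂ (EucM n →L[ℂ] EucM m)).aestronglyMeasurable_comp₂
      hψ.aestronglyMeasurable hf.aestronglyMeasurable
  refine (hf.norm.const_mul C).mono' hm ?_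
  filter_upwards with a
  calc ‖ψ a (f a)‖ ≤ ‖ψ a‖ * ‖f a‖ := (ψ a).le_opNorm _
  _ ≤ C * ‖f a‖ := mul_le_mul_of_nonneg_right (hC a) (norm_nonneg _)

lemma HS_integrable {M : ℕ} (u : HS M) : Integrable (⇑u) volume :=
  (Lp.memLp u).integrable one_le_two

lemma HS_integral_norm_le {M : ℕ} (u : HS M) : ∫ k, ‖u k‖ ≤ ‖u‖ := by
  have h1 : eLpNorm (⇑u) 1 volume ≤ eLpNorm (⇑u) 2 volume :=
    eLpNorm_le_eLpNorm_of_exponent_le one_le_two (Lp.aestronglyMeasurable u)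
  have h2 : ∫ k, ‖u k‖ = (eLpNorm (⇑u) 1 volume).toReal := by
    rw [eLpNorm_one_eq_lintegral_enorm]
    rw [integral_norm_eq_lintegral_enorm (Lp.aestronglyMeasurable u)]
  rw [h2, Lp.norm_def]
  exact ENNReal.toReal_mono (Lp.eLpNorm_ne_top u) h1


set_option maxHeartbeats 1000000 in
/-- The composition `(A₁⟨B₁·⟩₁) ∘ (A₂⟨B₂·⟩₂)` is the integral operator with
continuous matrix kernel `D(k,k') = A₁(k) B₁(k₁',k₂) A₂(k₁',k₂) B₂(k')`; in particular it is a
compact operator on `H = L²([0,1]²,ℂ^M)`. -/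
theorem stmt2 (M M₁ M₂ : ℕ) (hM : 0 < M) (hM₁ : 0 < M₁) (hM₂ : 0 < M₂)
    (A₁ : Box → Matrix (Fin M) (Fin M₁) ℂ) (B₁ : Box → Matrix (Fin M₁) (Fin M) ℂ)
    (A₂ : Box → Matrix (Fin M) (Fin M₂) ℂ) (B₂ : Box → Matrix (Fin M₂) (Fin M) ℂ)
    (hA₁ : Continuous A₁) (hB₁ : Continuous B₁) (hA₂ : Continuous A₂) (hB₂ : Continuous B₂)
    (T₁ T₂ : HS M →L[ℂ] HS M)
    (hT₁ : ∀ u : HS M, ∀ᵐ k : Box,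
      T₁ u k = toEuc M ((A₁ k).mulVec (∫ t : I01, toEuc M₁ ((B₁ (t, k.2)).mulVec (u (t, k.2))))))
    (hT₂ : ∀ u : HS M, ∀ᵐ k : Box,
      T₂ u k = toEuc M ((A₂ k).mulVec (∫ t : I01, toEuc M₂ ((B₂ (k.1, t)).mulVec (u (k.1, t)))))) :
    (∀ u : HS M, ∀ᵐ k : Box, (T₁.comp T₂) u k =
        ∫ k' : Box, toEuc M ((A₁ k * B₁ (k'.1, k.2) * A₂ (k'.1, k.2) * B₂ k').mulVec (u k')))
    ∧ IsCompactOperator ⇑(T₁.comp T₂) := by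
  -- the intermediate kernel
  set Kin : I01 → Box → Matrix (Fin M₁) (Fin M) ℂ :=
    fun x k' => B₁ (k'.1, x) * A₂ (k'.1, x) * B₂ k' with hKin
  set Θ : I01 × Box → (EucM M →L[ℂ] EucM M₁) := fun p => mvEL M₁ M (Kin p.1 p.2) with hΘ
  have hΘc : Continuous Θ := by
    refine (continuous_mvEL M₁ M).comp ?_
    exact Continuous.matrix_mul (Continuous.matrix_mul (hB₁.comp (by fun_prop))
      (hA₂.comp (by fun_prop))) (hB₂.comp continuous_snd)
  obtain ⟨CK, hCK0, hCKb⟩ := exists_bound hΘc.norm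
  have hθx : ∀ x : I01, Continuous fun k' : Box => Θ (x, k') :=
    fun x => hΘc.comp (Continuous.prodMk_right x)
  have hWint : ∀ (u : HS M) (x : I01), Integrable (fun k' => Θ (x, k') (u k')) volume :=
    fun u x => integrable_clm_apply (hθx x) (fun k' => hCKb (x, k')) (HS_integrable u)
  set W : HS M → I01 → EucM M₁ := fun u x => ∫ k' : Box, Θ (x, k') (u k') with hW
  have hWle : ∀ (u : HS M) (x : I01), ‖W u x‖ ≤ CK * ∫ k' : Box, ‖u k'‖ := by
    intro u x
    refine (norm_integral_le_integral_norm _).trans ?_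
    rw [← integral_const_mul]
    refine integral_mono (hWint u x).norm ((HS_integrable u).norm.const_mul CK) fun k' => ?_
    exact ((Θ (x, k')).le_opNorm _).trans
      (mul_le_mul_of_nonneg_right (hCKb (x, k')) (norm_nonneg _))
  have hWmod : ∀ ε > (0:ℝ), ∃ δ > (0:ℝ), ∀ x y : I01, dist x y < δ → ∀ u : HS M,
      ‖W u x - W u y‖ ≤ ε * ∫ k' : Box, ‖u k'‖ := by
    intro ε hε
    have hU : UniformContinuous Θ := CompactSpace.uniformContinuous_of_continuous hΘc
    rw [Metric.uniformContinuous_iff] at hU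
    obtain ⟨δ, hδ, hδ'⟩ := hU ε hε
    refine ⟨δ, hδ, fun x y hxy u => ?_⟩
    have hpt : ∀ k' : Box, ‖Θ (x, k') - Θ (y, k')‖ ≤ ε := by
      intro k'
      have h1 : dist ((x, k') : ↑I01 × Box) (y, k') < δ := by
        rw [Prod.dist_eq, dist_self, max_eq_left dist_nonneg]; exact hxy
      have h2 := hδ' h1
      rw [dist_eq_norm] at h2
      exact h2.le
    show ‖(∫ k' : Box, Θ (x, k') (u k')) - ∫ k' : Box, Θ (y, k') (u k')‖ ≤ _
    rw [← integral_sub (hWint u x) (hWint u y), ← integral_const_mul]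
    refine (norm_integral_le_integral_norm _).trans
      (integral_mono ((hWint u x).sub (hWint u y)).norm
        ((HS_integrable u).norm.const_mul ε) fun k' => ?_)
    show ‖Θ (x, k') (u k') - Θ (y, k') (u k')‖ ≤ ε * ‖u k'‖
    rw [← ContinuousLinearMap.sub_apply]
    exact ((Θ (x, k') - Θ (y, k')).le_opNorm _).trans
      (mul_le_mul_of_nonneg_right (hpt k') (norm_nonneg _))
  have hWcont : ∀ u : HS M, Continuous (W u) := by
    intro u
    rw [Metric.continuous_iff]
    intro x ε hε
    set c := ∫ k' : Box, ‖u k'‖ with hc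
    have hc0 : 0 ≤ c := integral_nonneg fun _ => norm_nonneg _
    have hε' : 0 < ε / (c + 1) := div_pos hε (by linarith)
    obtain ⟨δ, hδ, hmod⟩ := hWmod _ hε'
    refine ⟨δ, hδ, fun y hyx => ?_⟩
    have h2 : ε / (c + 1) * c < ε := by
      rw [div_mul_eq_mul_div, div_lt_iff₀ (by linarith)]
      nlinarith
    calc dist (W u y) (W u x) = ‖W u y - W u x‖ := dist_eq_norm _ _
    _ ≤ ε / (c + 1) * c := hmod y x hyx u
    _ < ε := h2
  have hmain : ∀ u : HS M, ∀ᵐ k : Box, (T₁.comp T₂) u k = mvEL M M₁ (A₁ k) (W u k.2) := by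
    intro u
    have hu := HS_integrable u
    set g : Box → EucM M :=
      fun k' => mvEL M M₂ (A₂ k') (∫ t : I01, mvEL M₂ M (B₂ (k'.1, t)) (u (k'.1, t))) with hgdef
    have h2 : ∀ᵐ k' : Box, T₂ u k' = g k' := by
      filter_upwards [hT₂ u] with k' h
      rw [h]
      have e1 : (∫ t : I01, mvEL M₂ M (B₂ (k'.1, t)) (u (k'.1, t)) : EucM M₂)
          = toEuc M₂ (∫ t : I01, (B₂ (k'.1, t)).mulVec (u (k'.1, t))) :=
        integral_euc_eq _ _ _
      exact congrArg (fun X : EucM M₂ => toEuc M ((A₂ k').mulVec X)) e1.symm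
    obtain ⟨C₂, hC₂0, hC₂b⟩ := exists_bound ((continuous_mvEL M₂ M).comp hB₂).norm
    have hF₂ : Integrable (fun k' : Box => mvEL M₂ M (B₂ k') (u k')) volume :=
      integrable_clm_apply ((continuous_mvEL M₂ M).comp hB₂) hC₂b hu
    have hF₂' : ∀ᵐ t : I01, Integrable (fun t' : I01 => mvEL M₂ M (B₂ (t, t')) (u (t, t'))) volume :=
      hF₂.prod_right_ae
    have hswap : MeasurePreserving (Prod.swap : ↑I01 × ↑I01 → ↑I01 × ↑I01)
        ((volume : Measure ↑I01).prod volume) ((volume : Measure ↑I01).prod volume) :=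
      Measure.measurePreserving_swap
    have h2' : ∀ᵐ p : ↑I01 × ↑I01 ∂((volume : Measure ↑I01).prod volume),
        T₂ u (p.2, p.1) = g (p.2, p.1) := hswap.quasiMeasurePreserving.ae h2
    have hgood := Measure.ae_ae_of_ae_prod h2'
    have hkey : ∀ᵐ x : ↑I01,
        (∫ t : I01, mvEL M₁ M (B₁ (t, x)) (T₂ u (t, x))) = W u x := by
      filter_upwards [hgood] with x hx
      calc (∫ t : I01, mvEL M₁ M (B₁ (t, x)) (T₂ u (t, x)))
          = ∫ t : I01, mvEL M₁ M (B₁ (t, x)) (g (t, x)) :=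
            integral_congr_ae (hx.mono fun t ht => congrArg _ ht)
        _ = ∫ t : I01, ∫ t' : I01, Θ (x, (t, t')) (u (t, t')) := by
            refine integral_congr_ae (hF₂'.mono fun t ht => ?_)
            calc mvEL M₁ M (B₁ (t, x)) (g (t, x))
                = mvEL M₁ M₂ (B₁ (t, x) * A₂ (t, x))
                    (∫ t' : I01, mvEL M₂ M (B₂ (t, t')) (u (t, t'))) := mvEL_mul _ _ _
              _ = ∫ t' : I01, mvEL M₁ M₂ (B₁ (t, x) * A₂ (t, x))
                    (mvEL M₂ M (B₂ (t, t')) (u (t, t'))) :=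
                  (ContinuousLinearMap.integral_comp_comm _ ht).symm
              _ = ∫ t' : I01, Θ (x, (t, t')) (u (t, t')) := by
                  refine integral_congr_ae (Filter.Eventually.of_forall fun t' => ?_)
                  exact mvEL_mul _ _ _
        _ = ∫ p : Box, Θ (x, p) (u p) := integral_integral (hWint u x)
        _ = W u x := rfl
    have hsnd : Measure.QuasiMeasurePreserving (Prod.snd : Box → ↑I01)
        (volume : Measure Box) (volume : Measure ↑I01) := Measure.quasiMeasurePreserving_snd
    have hkey' : ∀ᵐ k : Box,
        (∫ t : I01, mvEL M₁ M (B₁ (t, k.2)) (T₂ u (t, k.2))) = W u k.2 := hsnd.ae hkey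
    filter_upwards [hT₁ (T₂ u), hkey'] with k hk1 hk2
    show T₁ (T₂ u) k = mvEL M M₁ (A₁ k) (W u k.2)
    rw [hk1]
    have e1 : (∫ t : I01, mvEL M₁ M (B₁ (t, k.2)) (T₂ u (t, k.2)) : EucM M₁)
        = toEuc M₁ (∫ t : I01, (B₁ (t, k.2)).mulVec (T₂ u (t, k.2))) :=
      integral_euc_eq _ _ _
    have e2 : toEuc M ((A₁ k).mulVec
          (∫ t : I01, toEuc M₁ ((B₁ (t, k.2)).mulVec (T₂ u (t, k.2)))))
        = mvEL M M₁ (A₁ k) (∫ t : I01, mvEL M₁ M (B₁ (t, k.2)) (T₂ u (t, k.2))) :=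
      congrArg (fun X : EucM M₁ => toEuc M ((A₁ k).mulVec X)) e1.symm
    rw [e2, hk2]
  have hrepr : ∀ (u : HS M) (k : Box), mvEL M M₁ (A₁ k) (W u k.2) =
      ∫ k' : Box, toEuc M ((A₁ k * B₁ (k'.1, k.2) * A₂ (k'.1, k.2) * B₂ k').mulVec (u k')) := by
    intro u k
    calc mvEL M M₁ (A₁ k) (W u k.2)
        = ∫ k' : Box, mvEL M M₁ (A₁ k) (Θ (k.2, k') (u k')) :=
          (ContinuousLinearMap.integral_comp_comm _ (hWint u k.2)).symm
      _ = ∫ k' : Box, toEuc M ((A₁ k * B₁ (k'.1, k.2) * A₂ (k'.1, k.2) * B₂ k').mulVec (u k')) := by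
          refine integral_congr_ae (Filter.Eventually.of_forall fun k' => ?_)
          show mvEL M M₁ (A₁ k) (mvEL M₁ M (Kin k.2 k') (u k')) = _
          rw [mvEL_mul]
          show toEuc M ((A₁ k * Kin k.2 k').mulVec (u k')) = _
          rw [show A₁ k * Kin k.2 k' = A₁ k * B₁ (k'.1, k.2) * A₂ (k'.1, k.2) * B₂ k' from by
            simp only [hKin, Matrix.mul_assoc]]
  constructor
  · intro u
    filter_upwards [hmain u] with k hk
    rw [hk, hrepr u k]
  · -- compactness
    obtain ⟨CA, hCA0, hCAb⟩ := exists_bound ((continuous_mvEL M M₁).comp hA₁).norm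
    set WB : HS M → BoundedContinuousFunction ↑I01 (EucM M₁) :=
      fun u => BoundedContinuousFunction.mkOfCompact ⟨W u, hWcont u⟩ with hWB
    have hfΦmem : ∀ Wb : BoundedContinuousFunction ↑I01 (EucM M₁),
        MemLp (fun k : Box => mvEL M M₁ (A₁ k) (Wb k.2)) 2 volume := by
      intro Wb
      have hc : Continuous fun k : Box => mvEL M M₁ (A₁ k) (Wb k.2) :=
        Continuous.clm_apply ((continuous_mvEL M M₁).comp hA₁)
          (Wb.continuous.comp continuous_snd)
      refine MemLp.of_bound hc.aestronglyMeasurable (CA * ‖Wb‖)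
        (Filter.Eventually.of_forall fun k => ?_)
      refine ((mvEL M M₁ (A₁ k)).le_opNorm _).trans ?_
      exact mul_le_mul (hCAb k) (Wb.norm_coe_le_norm k.2) (norm_nonneg _) hCA0
    set Φ : BoundedContinuousFunction ↑I01 (EucM M₁) → HS M :=
      fun Wb => (hfΦmem Wb).toLp _ with hΦdef
    have hΦlip : LipschitzWith (Real.toNNReal CA) Φ := by
      refine LipschitzWith.of_dist_le_mul fun Wb Wb' => ?_
      rw [dist_eq_norm, hΦdef]
      have h1 : (hfΦmem Wb).toLp _ - (hfΦmem Wb').toLp _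
          = ((hfΦmem Wb).sub (hfΦmem Wb')).toLp
              ((fun k : Box => mvEL M M₁ (A₁ k) (Wb k.2))
                - fun k : Box => mvEL M M₁ (A₁ k) (Wb' k.2)) :=
        (MemLp.toLp_sub _ _).symm
      rw [h1, Lp.norm_toLp]
      have h2 : eLpNorm ((fun k : Box => mvEL M M₁ (A₁ k) (Wb k.2))
            - fun k : Box => mvEL M M₁ (A₁ k) (Wb' k.2)) 2 volume
          ≤ ENNReal.ofReal (CA * dist Wb Wb') := by
        refine (eLpNorm_le_of_ae_bound (C := CA * dist Wb Wb')
          (Filter.Eventually.of_forall fun k => ?_)).trans ?_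
        · show ‖mvEL M M₁ (A₁ k) (Wb k.2) - mvEL M M₁ (A₁ k) (Wb' k.2)‖ ≤ _
          rw [← map_sub]
          refine ((mvEL M M₁ (A₁ k)).le_opNorm _).trans ?_
          have := BoundedContinuousFunction.dist_coe_le_dist (f := Wb) (g := Wb') k.2
          rw [dist_eq_norm] at this
          exact mul_le_mul (hCAb k) this (norm_nonneg _) hCA0
        · rw [measure_univ, ENNReal.one_rpow, one_mul]
      refine (ENNReal.toReal_mono ENNReal.ofReal_ne_top h2).trans ?_
      rw [ENNReal.toReal_ofReal (mul_nonneg hCA0 dist_nonneg)]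
      rw [Real.coe_toNNReal CA hCA0]
    set A : Set (BoundedContinuousFunction ↑I01 (EucM M₁)) :=
      WB '' Metric.closedBall 0 1 with hA
    have in_s : ∀ (f : BoundedContinuousFunction ↑I01 (EucM M₁)) (x : ↑I01),
        f ∈ A → f x ∈ Metric.closedBall (0 : EucM M₁) CK := by
      rintro f x ⟨u, hu1, rfl⟩
      rw [Metric.mem_closedBall, dist_zero_right]
      show ‖W u x‖ ≤ CK
      refine (hWle u x).trans ?_
      have h3 : ∫ k' : Box, ‖u k'‖ ≤ 1 :=
        (HS_integral_norm_le u).trans (by simpa using hu1)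
      calc CK * ∫ k' : Box, ‖u k'‖ ≤ CK * 1 := by
            refine mul_le_mul_of_nonneg_left h3 hCK0
      _ = CK := mul_one CK
    have equicont : Equicontinuous ((↑) : A → ↑I01 → EucM M₁) := by
      apply UniformEquicontinuous.equicontinuous
      rw [Metric.uniformEquicontinuous_iff]
      intro ε hε
      obtain ⟨δ, hδ, hmod⟩ := hWmod (ε / 2) (by linarith)
      refine ⟨δ, hδ, fun x y hxy i => ?_⟩
      obtain ⟨f, hfA⟩ := i
      obtain ⟨u, hu1, rfl⟩ := hfA
      show dist (W u x) (W u y) < ε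
      rw [dist_eq_norm]
      have h3 : ∫ k' : Box, ‖u k'‖ ≤ 1 :=
        (HS_integral_norm_le u).trans (by simpa using hu1)
      have h4 : (0:ℝ) ≤ ∫ k' : Box, ‖u k'‖ := integral_nonneg fun _ => norm_nonneg _
      calc ‖W u x - W u y‖ ≤ (ε / 2) * ∫ k' : Box, ‖u k'‖ := hmod x y hxy u
      _ ≤ (ε / 2) * 1 := mul_le_mul_of_nonneg_left h3 (by linarith)
      _ < ε := by linarith
    have hScomp : IsCompact (closure A) :=
      BoundedContinuousFunction.arzela_ascoli _ (isCompact_closedBall _ _) A in_s equicont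
    refine ⟨Φ '' closure A, hScomp.image hΦlip.continuous,
      Filter.mem_of_superset (Metric.closedBall_mem_nhds 0 one_pos) ?_⟩
    intro u hu
    have hTu : (T₁.comp T₂) u = Φ (WB u) := by
      apply Lp.ext
      have h2 : ⇑(Φ (WB u)) =ᵐ[volume] fun k : Box => mvEL M M₁ (A₁ k) ((WB u) k.2) :=
        MemLp.coeFn_toLp _
      filter_upwards [hmain u, h2] with k hk1 hk2
      rw [hk1, hk2]
      rfl
    rw [Set.mem_preimage, hTu]
    exact Set.mem_image_of_mem Φ (subset_closure (Set.mem_image_of_mem WB hu))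
end
end

section
/- Let C₁ (size M×M₁) and B₁ (size M₁×M) be continuous matrix-valued functions on [0,1]², and set E₁(k₂) = I_{M₁} + ∫₀¹ B₁(t,k₂)C₁(t,k₂) dt. If E₁(k₂⁰) is singular for some k₂⁰ ∈ [0,1], then the bounded operator u ↦ u + C₁⟨B₁u⟩₁ on H = L²([0,1]², ℂ^M) is not invertible. -/
open MeasureTheory Set

noncomputable section

/-- `E₁(k₂) = I + ∫₀¹ B₁(t,k₂) C₁(t,k₂) dt` (entrywise integral). -/
def E1c {M M₁ : ℕ} (C₁ : Box → Matrix (Fin M) (Fin M₁) ℂ)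
    (B₁ : Box → Matrix (Fin M₁) (Fin M) ℂ) : I01 → Matrix (Fin M₁) (Fin M₁) ℂ :=
  fun k₂ => 1 + Matrix.of fun i j => ∫ t : I01, (B₁ (t, k₂) * C₁ (t, k₂)) i j

/-! ### Auxiliary material -/

namespace Stmt6Aux

/-- A matrix as a continuous linear map between Euclidean spaces. -/
def mCLM {m n : ℕ} (A : Matrix (Fin m) (Fin n) ℂ) : EucM n →L[ℂ] EucM m :=
  LinearMap.toContinuousLinearMap (Matrix.toEuclideanLin A)

lemma mCLM_apply {m n : ℕ} (A : Matrix (Fin m) (Fin n) ℂ) (x : Fin n → ℂ) :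
    mCLM A (toEuc n x) = toEuc m (A.mulVec x) := rfl

lemma continuous_mCLM {m n : ℕ} : Continuous (mCLM (m := m) (n := n)) := by
  have : IsLinearMap ℂ (mCLM (m := m) (n := n)) := by
    constructor <;> intros <;> unfold mCLM <;> simp
  exact (this.mk' _).continuous_of_finiteDimensional

lemma cont_integrable {E : Type*} [NormedAddCommGroup E] {X : Type*} [MeasureSpace X]
    [TopologicalSpace X] [CompactSpace X] [OpensMeasurableSpace X]
    [IsFiniteMeasure (volume : Measure X)] [SecondCountableTopology X]
    {f : X → E} (hf : Continuous f) : Integrable f volume := by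
  obtain ⟨C, hC⟩ := isCompact_univ.exists_bound_of_continuousOn hf.continuousOn
  exact memLp_one_iff_integrable.mp
    (MemLp.of_bound hf.aestronglyMeasurable C (ae_of_all _ fun x => hC x trivial))

lemma continuous_toEuc_mulVec {m n : ℕ} {X : Type*} [TopologicalSpace X]
    {A : X → Matrix (Fin m) (Fin n) ℂ} (hA : Continuous A) (v : Fin n → ℂ) :
    Continuous fun x => toEuc m ((A x).mulVec v) := by
  have : (fun x => toEuc m ((A x).mulVec v)) = fun x => mCLM (A x) (toEuc n v) := rfl
  rw [this]
  exact (continuous_mCLM.comp hA).clm_apply continuous_const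

lemma vol_eq_image (s : Set I01) : (volume : Measure I01) s = volume (Subtype.val '' s) := by
  rw [show (volume : Measure I01) = Measure.comap Subtype.val volume from rfl,
    (MeasurableEmbedding.subtype_coe measurableSet_Icc).comap_apply]

lemma pos_meas {U : Set I01} (hU : IsOpen U) {x : I01} (hx : x ∈ U) :
    0 < (volume : Measure I01) U := by
  obtain ⟨r, hr, hball⟩ := Metric.isOpen_iff.mp hU x hx
  have h1 : Ioo (max 0 ((x : ℝ) - r)) (min 1 ((x : ℝ) + r)) ⊆ Subtype.val '' Metric.ball x r := by
    rintro y ⟨hy1, hy2⟩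
    have hy0 : (0:ℝ) ≤ y := le_of_lt (lt_of_le_of_lt (le_max_left _ _) hy1)
    have hy1' : y ≤ 1 := le_of_lt (lt_of_lt_of_le hy2 (min_le_left _ _))
    refine ⟨⟨y, hy0, hy1'⟩, ?_, rfl⟩
    rw [Metric.mem_ball, Subtype.dist_eq, Real.dist_eq, abs_sub_lt_iff]
    constructor
    · linarith [lt_of_lt_of_le hy2 (min_le_right 1 ((x:ℝ)+r))]
    · linarith [lt_of_le_of_lt (le_max_right 0 ((x:ℝ)-r)) hy1]
  have hx0 : (0:ℝ) ≤ x := x.2.1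
  have hx1 : (x:ℝ) ≤ 1 := x.2.2
  have hlt : max 0 ((x:ℝ) - r) < min 1 ((x:ℝ) + r) := by
    apply max_lt <;> apply lt_min <;> linarith
  calc (0 : ENNReal) < volume (Ioo (max 0 ((x : ℝ) - r)) (min 1 ((x : ℝ) + r))) := by
        rw [Real.volume_Ioo]; exact ENNReal.ofReal_pos.mpr (by linarith)
    _ ≤ volume (Subtype.val '' Metric.ball x r) := measure_mono h1
    _ = (volume : Measure I01) (Metric.ball x r) := (vol_eq_image _).symm
    _ ≤ (volume : Measure I01) U := measure_mono hball

lemma ae_sections {E : Type*} {u f : Box → E} (h : u =ᵐ[volume] f) :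
    ∀ᵐ k₂ ∂(volume : Measure I01), (fun t => u (t, k₂)) =ᵐ[(volume : Measure I01)]
      (fun t => f (t, k₂)) := by
  obtain ⟨t, hsub, htm, ht0⟩ := exists_measurable_superset_of_null (ae_iff.mp h)
  have hswap : ((volume : Measure I01).prod volume) (Prod.swap ⁻¹' t) = 0 := by
    rw [Measure.measurePreserving_swap.measure_preimage htm.nullMeasurableSet]
    exact ht0
  filter_upwards [Measure.measure_ae_null_of_prod_null hswap] with k₂ hk₂
  rw [Filter.EventuallyEq, ae_iff]
  refine measure_mono_null ?_ hk₂
  intro a ha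
  exact hsub ha

lemma ae_snd_lift {p : I01 → Prop} (h : ∀ᵐ k₂ ∂(volume : Measure I01), p k₂) :
    ∀ᵐ q : Box ∂volume, p q.2 :=
  Measure.quasiMeasurePreserving_snd.ae h

variable {M M₁ : ℕ} {C₁ : Box → Matrix (Fin M) (Fin M₁) ℂ} {B₁ : Box → Matrix (Fin M₁) (Fin M) ℂ}

lemma key_int (hC₁ : Continuous C₁) (hB₁ : Continuous B₁) (v : Fin M₁ → ℂ) (k₂ : I01) :
    (∫ t : I01, (B₁ (t, k₂) * C₁ (t, k₂)).mulVec v) = (E1c C₁ B₁ k₂ - 1).mulVec v := by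
  have hbc : Continuous fun t : I01 => B₁ (t, k₂) * C₁ (t, k₂) := by
    have h1 : Continuous fun t : I01 => ((t, k₂) : Box) := by fun_prop
    exact ((hB₁.comp h1).matrix_mul (hC₁.comp h1))
  have hbce : ∀ i j, Continuous fun t : I01 => (B₁ (t, k₂) * C₁ (t, k₂)) i j := by
    intro i j
    exact ((continuous_apply j).comp ((continuous_apply i).comp hbc))
  have hfun : (fun t : I01 => (B₁ (t, k₂) * C₁ (t, k₂)).mulVec v)
      = fun t : I01 => fun i => ∑ j, (B₁ (t, k₂) * C₁ (t, k₂)) i j * v j := by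
    funext t i
    simp [Matrix.mulVec, dotProduct]
  have hcont : Continuous fun t : I01 => (B₁ (t, k₂) * C₁ (t, k₂)).mulVec v := by
    rw [hfun]
    exact continuous_pi fun i => continuous_finset_sum _ fun j _ => (hbce i j).mul continuous_const
  have hint : Integrable (fun t : I01 => (B₁ (t, k₂) * C₁ (t, k₂)).mulVec v) volume :=
    cont_integrable hcont
  funext i
  have hproj : (∫ t : I01, (B₁ (t, k₂) * C₁ (t, k₂)).mulVec v) i
      = ContinuousLinearMap.proj (R := ℂ) (φ := fun _ : Fin M₁ => ℂ) i
        (∫ t : I01, (B₁ (t, k₂) * C₁ (t, k₂)).mulVec v) := rfl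
  rw [hproj, ← ContinuousLinearMap.integral_comp_comm _ hint]
  have h1 : ∀ t : I01, ContinuousLinearMap.proj (R := ℂ) (φ := fun _ : Fin M₁ => ℂ) i
      ((B₁ (t, k₂) * C₁ (t, k₂)).mulVec v)
      = ∑ j, (B₁ (t, k₂) * C₁ (t, k₂)) i j * v j := by
    intro t
    simp [Matrix.mulVec, dotProduct]
  rw [MeasureTheory.integral_congr_ae (ae_of_all _ h1)]
  rw [MeasureTheory.integral_finset_sum _ (fun j _ => (cont_integrable (by
    exact (hbce i j).mul continuous_const)))]
  have h2 : ∀ j, ∫ t : I01, (B₁ (t, k₂) * C₁ (t, k₂)) i j * v j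
      = (∫ t : I01, (B₁ (t, k₂) * C₁ (t, k₂)) i j) * v j := fun j => integral_mul_const _ _
  simp only [h2]
  show _ = ((E1c C₁ B₁ k₂ - 1).mulVec v) i
  have h3 : E1c C₁ B₁ k₂ - 1 = Matrix.of fun i j => ∫ t : I01, (B₁ (t, k₂) * C₁ (t, k₂)) i j := by
    unfold E1c; exact add_sub_cancel_left 1 _
  rw [h3]
  simp [Matrix.mulVec, dotProduct]

lemma cont_E1c (hC₁ : Continuous C₁) (hB₁ : Continuous B₁) : Continuous (E1c C₁ B₁) := by
  unfold E1c
  apply continuous_const.add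
  apply continuous_matrix
  intro i j
  simp only [Matrix.of_apply]
  have hbc : Continuous fun p : Box => (B₁ p * C₁ p) i j :=
    (continuous_apply j).comp ((continuous_apply i).comp (hB₁.matrix_mul hC₁))
  obtain ⟨K, hK⟩ := isCompact_univ.exists_bound_of_continuousOn hbc.continuousOn
  apply MeasureTheory.continuous_of_dominated (bound := fun _ => K)
  · intro k₂
    exact (hbc.comp (by fun_prop : Continuous fun t : I01 => ((t, k₂) : Box))).aestronglyMeasurable
  · intro k₂
    exact ae_of_all _ fun t => hK (t, k₂) trivial
  · exact integrable_const K
  · exact ae_of_all _ fun t => hbc.comp (by fun_prop : Continuous fun k₂ : I01 => ((t, k₂) : Box))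

end Stmt6Aux

open Stmt6Aux

set_option maxHeartbeats 1000000 in
/-- If `E₁(k₂⁰)` is singular for some `k₂⁰ ∈ [0,1]`, then the operator
`u ↦ u + C₁⟨B₁u⟩₁` on `H = L²([0,1]²,ℂ^M)` is not invertible. -/
theorem stmt6 (M M₁ : ℕ) (hM : 0 < M) (hM₁ : 0 < M₁)
    (C₁ : Box → Matrix (Fin M) (Fin M₁) ℂ) (B₁ : Box → Matrix (Fin M₁) (Fin M) ℂ)
    (hC₁ : Continuous C₁) (hB₁ : Continuous B₁)
    (hsing : ∃ k₂0 : I01, ¬ IsUnit (E1c C₁ B₁ k₂0))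
    (P : HS M →L[ℂ] HS M)
    (hP : ∀ u : HS M, ∀ᵐ k : Box, P u k =
      u k + toEuc M ((C₁ k).mulVec (∫ t : I01, toEuc M₁ ((B₁ (t, k.2)).mulVec (u (t, k.2)))))) :
    ¬ IsUnit P := by
  intro hUnit
  classical
  -- the inverse gives a lower bound `‖w‖ ≤ ‖Q‖ * ‖P w‖`
  obtain ⟨Q, hQ⟩ : ∃ Q : HS M →L[ℂ] HS M, ∀ w : HS M, Q (P w) = w := by
    refine ⟨((hUnit.unit⁻¹ : (HS M →L[ℂ] HS M)ˣ) : HS M →L[ℂ] HS M), fun w => ?_⟩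
    have h1 := ContinuousLinearMap.ext_iff.mp (Units.inv_mul hUnit.unit) w
    rw [ContinuousLinearMap.mul_apply, ContinuousLinearMap.one_apply, hUnit.unit_spec] at h1
    exact h1
  have hbound : ∀ w : HS M, ‖w‖ ≤ ‖Q‖ * ‖P w‖ := fun w => by
    conv_lhs => rw [← hQ w]
    exact Q.le_opNorm _
  -- a kernel vector of `E₁(k₀)`
  obtain ⟨k₀, hk₀⟩ := hsing
  have hdet : (E1c C₁ B₁ k₀).det = 0 := by
    by_contra h
    exact hk₀ ((Matrix.isUnit_iff_isUnit_det _).mpr (isUnit_iff_ne_zero.mpr h))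
  obtain ⟨v, hv0, hvE⟩ := Matrix.exists_mulVec_eq_zero_iff.mpr hdet
  -- a point where `C₁(t₀,k₀) v ≠ 0`
  obtain ⟨t₀, ht₀⟩ : ∃ t₀ : I01, (C₁ (t₀, k₀)).mulVec v ≠ 0 := by
    by_contra h
    push_neg at h
    have h0 : ∀ t : I01, (B₁ (t, k₀) * C₁ (t, k₀)).mulVec v = 0 := fun t => by
      rw [← Matrix.mulVec_mulVec, h t, Matrix.mulVec_zero]
    have h2 : (E1c C₁ B₁ k₀ - 1).mulVec v = 0 := by
      rw [← key_int hC₁ hB₁ v k₀]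
      have : (fun t : I01 => (B₁ (t, k₀) * C₁ (t, k₀)).mulVec v)
          = fun _ : I01 => (0 : Fin M₁ → ℂ) := by
        funext t; rw [h0 t]
      rw [this, integral_zero]
    rw [Matrix.sub_mulVec, Matrix.one_mulVec, hvE, zero_sub, neg_eq_zero] at h2
    exact hv0 h2
  -- basic continuous quantities and constants
  set ψ : Box → ℝ := fun p => ‖toEuc M ((C₁ p).mulVec v)‖ with hψdef
  have hψcont : Continuous ψ := (continuous_toEuc_mulVec hC₁ v).norm
  set c : ℝ := ψ (t₀, k₀) / 2 with hcdef
  have hψ0 : 0 < ψ (t₀, k₀) := by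
    rw [hψdef]
    simp only [norm_pos_iff]
    intro h
    exact ht₀ ((WithLp.equiv 2 (Fin M → ℂ)).symm.injective h)
  have hc : 0 < c := by positivity
  have hclt : c < ψ (t₀, k₀) := by rw [hcdef]; linarith
  obtain ⟨U, V, hUo, hVo, ht₀U, hk₀V, hUV⟩ :=
    isOpen_prod_iff.mp (isOpen_lt continuous_const hψcont) t₀ k₀ hclt
  -- operator-norm bound for `C₁`
  obtain ⟨K, hK⟩ := isCompact_univ.exists_bound_of_continuousOn
    (continuous_mCLM.comp hC₁).continuousOn
  have hK' : ∀ p : Box, ‖mCLM (C₁ p)‖ ≤ K := fun p => hK p trivial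
  have hK0 : 0 ≤ K := le_trans (norm_nonneg _) (hK' (t₀, k₀))
  -- measure-theoretic constants
  have hU_pos : 0 < (volume : Measure I01) U := pos_meas hUo ht₀U
  have hU_fin : (volume : Measure I01) U ≠ ⊤ := measure_ne_top _ _
  set aR : ℝ := (((volume : Measure I01) U) ^ ((1:ℝ)/2)).toReal with haRdef
  have haR : 0 < aR := by
    rw [haRdef]
    apply ENNReal.toReal_pos
    · exact (ENNReal.rpow_pos hU_pos hU_fin).ne'
    · exact ENNReal.rpow_ne_top_of_nonneg (by norm_num) hU_fin
  set ε : ℝ := c * aR / (‖Q‖ * K + 1) with hεdef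
  have hεpos : 0 < ε := by
    apply div_pos (mul_pos hc haR)
    positivity
  -- the set `J`
  have hΦcont : Continuous fun k₂ : I01 => toEuc M₁ ((E1c C₁ B₁ k₂).mulVec v) :=
    continuous_toEuc_mulVec (cont_E1c hC₁ hB₁) v
  set W : Set I01 := {k₂ : I01 | ‖toEuc M₁ ((E1c C₁ B₁ k₂).mulVec v)‖ < ε} with hWdef
  have hWo : IsOpen W := isOpen_lt hΦcont.norm continuous_const
  have hk₀W : k₀ ∈ W := by
    rw [hWdef]
    simp only [mem_setOf_eq, hvE]
    show ‖toEuc M₁ 0‖ < ε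
    rw [show toEuc M₁ 0 = 0 from rfl, norm_zero]
    exact hεpos
  set J : Set I01 := W ∩ V with hJdef
  have hJo : IsOpen J := hWo.inter hVo
  have hk₀J : k₀ ∈ J := ⟨hk₀W, hk₀V⟩
  have hJm : MeasurableSet J := hJo.measurableSet
  have hJ_pos : 0 < (volume : Measure I01) J := pos_meas hJo hk₀J
  have hJ_fin : (volume : Measure I01) J ≠ ⊤ := measure_ne_top _ _
  -- the test function
  set S : Set Box := {p : Box | p.2 ∈ J} with hSdef
  have hSm : MeasurableSet S := hJm.preimage measurable_snd
  set f : Box → EucM M := S.indicator (fun p => toEuc M ((C₁ p).mulVec v)) with hfdef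
  obtain ⟨K₁, hK₁⟩ := isCompact_univ.exists_bound_of_continuousOn
    (continuous_toEuc_mulVec hC₁ v).continuousOn
  have hf2 : MemLp f 2 volume := by
    apply MemLp.of_bound
      (((continuous_toEuc_mulVec hC₁ v).stronglyMeasurable.indicator hSm).aestronglyMeasurable) K₁
    apply ae_of_all
    intro p
    by_cases hp : p ∈ S
    · rw [Set.indicator_of_mem hp]; exact hK₁ p trivial
    · rw [Set.indicator_of_notMem hp, norm_zero]
      exact le_trans (norm_nonneg _) (hK₁ p trivial)
  set u : HS M := hf2.toLp f with hudef
  have hu : ⇑u =ᵐ[volume] f := hf2.coeFn_toLp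
  -- identification of `P u`
  set g : Box → EucM M :=
    S.indicator (fun p => toEuc M ((C₁ p).mulVec ((E1c C₁ B₁ p.2).mulVec v))) with hgdef
  have hPu : ⇑(P u) =ᵐ[volume] g := by
    have hsec2 : ∀ᵐ q : Box ∂volume,
        (fun t => u (t, q.2)) =ᵐ[(volume : Measure I01)] (fun t => f (t, q.2)) :=
      ae_snd_lift (ae_sections hu)
    filter_upwards [hP u, hu, hsec2] with p hp hup hsecp
    have hIeq : ((∫ t : I01, toEuc M₁ ((B₁ (t, p.2)).mulVec (u (t, p.2)))) : Fin M₁ → ℂ)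
        = ∫ t : I01, (B₁ (t, p.2)).mulVec (f (t, p.2)) := by
      apply integral_congr_ae
      filter_upwards [hsecp] with t ht
      rw [show (u (t, p.2) : EucM M) = f (t, p.2) from ht]
      rfl
    by_cases hpJ : p.2 ∈ J
    · have hSp : p ∈ S := hpJ
      have hfp : ∀ t : I01, f (t, p.2) = toEuc M ((C₁ (t, p.2)).mulVec v) := fun t =>
        Set.indicator_of_mem (show ((t, p.2) : Box) ∈ S from hpJ) _
      have heq2 : (fun t : I01 => (B₁ (t, p.2)).mulVec (f (t, p.2)))
          = fun t : I01 => (B₁ (t, p.2) * C₁ (t, p.2)).mulVec v := by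
        funext t
        rw [hfp t]
        show (B₁ (t, p.2)).mulVec ((C₁ (t, p.2)).mulVec v) = _
        rw [Matrix.mulVec_mulVec]
      rw [hp, hup, hIeq, heq2, key_int hC₁ hB₁ v p.2, hgdef, Set.indicator_of_mem hSp, hfdef,
        Set.indicator_of_mem hSp]
      show toEuc M ((C₁ p).mulVec v) + toEuc M ((C₁ p).mulVec ((E1c C₁ B₁ p.2 - 1).mulVec v))
          = toEuc M ((C₁ p).mulVec ((E1c C₁ B₁ p.2).mulVec v))
      have : (C₁ p).mulVec v + (C₁ p).mulVec ((E1c C₁ B₁ p.2 - 1).mulVec v)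
          = (C₁ p).mulVec ((E1c C₁ B₁ p.2).mulVec v) := by
        have hv' : v + ((E1c C₁ B₁ p.2).mulVec v - v) = (E1c C₁ B₁ p.2).mulVec v := by abel
        rw [Matrix.sub_mulVec, Matrix.one_mulVec, ← Matrix.mulVec_add, hv']
      exact this ▸ rfl
    · have hSp : p ∉ S := hpJ
      have hfp : ∀ t : I01, f (t, p.2) = 0 := fun t =>
        Set.indicator_of_notMem (show ¬ ((t, p.2) : Box) ∈ S from hpJ) _
      have heq2 : (fun t : I01 => (B₁ (t, p.2)).mulVec (f (t, p.2)))
          = fun _ : I01 => (0 : Fin M₁ → ℂ) := by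
        funext t
        rw [hfp t]
        show (B₁ (t, p.2)).mulVec (0 : Fin M → ℂ) = 0
        rw [Matrix.mulVec_zero]
      rw [hp, hup, hIeq, heq2, integral_zero, hgdef, Set.indicator_of_notMem hSp, hfdef,
        Set.indicator_of_notMem hSp]
      show (0 : EucM M) + toEuc M ((C₁ p).mulVec 0) = 0
      rw [Matrix.mulVec_zero]
      show (0 : EucM M) + 0 = 0
      rw [add_zero]
  -- upper bound on `‖P u‖`
  have hg_bound : ∀ p : Box,
      ‖g p‖ ≤ ‖(univ ×ˢ J).indicator (fun _ : Box => ((K * ε : ℝ) : ℂ)) p‖ := by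
    intro p
    by_cases hpJ : p.2 ∈ J
    · have hmem : p ∈ (univ ×ˢ J : Set Box) := ⟨trivial, hpJ⟩
      rw [hgdef, Set.indicator_of_mem (show p ∈ S from hpJ), Set.indicator_of_mem hmem]
      rw [Complex.norm_real, Real.norm_eq_abs, abs_of_nonneg (by positivity)]
      have h1 : toEuc M ((C₁ p).mulVec ((E1c C₁ B₁ p.2).mulVec v))
          = mCLM (C₁ p) (toEuc M₁ ((E1c C₁ B₁ p.2).mulVec v)) := rfl
      rw [h1]
      calc ‖mCLM (C₁ p) (toEuc M₁ ((E1c C₁ B₁ p.2).mulVec v))‖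
          ≤ ‖mCLM (C₁ p)‖ * ‖toEuc M₁ ((E1c C₁ B₁ p.2).mulVec v)‖ :=
            (mCLM (C₁ p)).le_opNorm _
        _ ≤ K * ε := by
            apply mul_le_mul (hK' p) (le_of_lt hpJ.1) (norm_nonneg _) hK0
    · rw [hgdef, Set.indicator_of_notMem (show p ∉ S from hpJ),
        Set.indicator_of_notMem (fun hmem => hpJ hmem.2), norm_zero, norm_zero]
  have hPu_norm : ‖P u‖
      ≤ ((‖((K * ε : ℝ) : ℂ)‖₊ : ENNReal) * (volume : Measure I01) J ^ ((1:ℝ)/2)).toReal := by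
    rw [MeasureTheory.Lp.norm_def, eLpNorm_congr_ae hPu]
    apply ENNReal.toReal_mono
    · exact ENNReal.mul_ne_top ENNReal.coe_ne_top
        (ENNReal.rpow_ne_top_of_nonneg (by norm_num) hJ_fin)
    calc eLpNorm g 2 volume
        ≤ eLpNorm ((univ ×ˢ J).indicator (fun _ : Box => ((K * ε : ℝ) : ℂ))) 2 volume :=
          eLpNorm_mono hg_bound
      _ = (‖((K * ε : ℝ) : ℂ)‖₊ : ENNReal) * (volume : Measure Box) (univ ×ˢ J) ^ ((1:ℝ)/2) := by
          rw [eLpNorm_indicator_const (MeasurableSet.univ.prod hJm) two_ne_zero ENNReal.ofNat_ne_top]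
          norm_num [enorm_eq_nnnorm]
      _ = (‖((K * ε : ℝ) : ℂ)‖₊ : ENNReal) * (volume : Measure I01) J ^ ((1:ℝ)/2) := by
          rw [show (volume : Measure Box) (univ ×ˢ J)
            = (volume : Measure I01) univ * (volume : Measure I01) J from
            Measure.prod_prod _ _, measure_univ, one_mul]
  -- lower bound on `‖u‖`
  have hf_lb : ∀ p : Box,
      ‖(U ×ˢ J).indicator (fun _ : Box => ((c : ℝ) : ℂ)) p‖ ≤ ‖f p‖ := by
    intro p
    by_cases hp : p ∈ (U ×ˢ J : Set Box)
    · rw [Set.indicator_of_mem hp, hfdef, Set.indicator_of_mem (show p ∈ S from hp.2)]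
      rw [Complex.norm_real, Real.norm_eq_abs, abs_of_pos hc]
      have : (p.1, p.2) ∈ (U ×ˢ V : Set Box) := ⟨hp.1, hp.2.2⟩
      have hlt := hUV this
      simp only [mem_setOf_eq] at hlt
      exact le_of_lt hlt
    · rw [Set.indicator_of_notMem hp, norm_zero]
      exact norm_nonneg _
  have hu_norm : ((‖((c : ℝ) : ℂ)‖₊ : ENNReal)
      * ((volume : Measure I01) U * (volume : Measure I01) J) ^ ((1:ℝ)/2)).toReal ≤ ‖u‖ := by
    rw [hudef, MeasureTheory.Lp.norm_toLp]
    apply ENNReal.toReal_mono hf2.eLpNorm_ne_top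
    calc (‖((c : ℝ) : ℂ)‖₊ : ENNReal)
        * ((volume : Measure I01) U * (volume : Measure I01) J) ^ ((1:ℝ)/2)
        = (‖((c : ℝ) : ℂ)‖₊ : ENNReal) * (volume : Measure Box) (U ×ˢ J) ^ ((1:ℝ)/2) := by
          rw [show (volume : Measure Box) (U ×ˢ J)
            = (volume : Measure I01) U * (volume : Measure I01) J from Measure.prod_prod _ _]
      _ = eLpNorm ((U ×ˢ J).indicator (fun _ : Box => ((c : ℝ) : ℂ))) 2 volume := by
          rw [eLpNorm_indicator_const (hUo.measurableSet.prod hJm) two_ne_zero ENNReal.ofNat_ne_top]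
          norm_num [enorm_eq_nnnorm]
      _ ≤ eLpNorm f 2 volume := eLpNorm_mono hf_lb
  -- put everything together
  set bR : ℝ := (((volume : Measure I01) J) ^ ((1:ℝ)/2)).toReal with hbRdef
  have hbR : 0 < bR := by
    rw [hbRdef]
    apply ENNReal.toReal_pos
    · exact (ENNReal.rpow_pos hJ_pos hJ_fin).ne'
    · exact ENNReal.rpow_ne_top_of_nonneg (by norm_num) hJ_fin
  have hlhs : c * (aR * bR)
      = ((‖((c : ℝ) : ℂ)‖₊ : ENNReal)
        * ((volume : Measure I01) U * (volume : Measure I01) J) ^ ((1:ℝ)/2)).toReal := by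
    rw [ENNReal.mul_rpow_of_nonneg _ _ (by norm_num : (0:ℝ) ≤ (1:ℝ)/2)]
    rw [ENNReal.toReal_mul, ENNReal.toReal_mul, ENNReal.coe_toReal, coe_nnnorm,
      Complex.norm_real, Real.norm_eq_abs, abs_of_pos hc, haRdef, hbRdef]
  have hrhs : ((‖((K * ε : ℝ) : ℂ)‖₊ : ENNReal)
      * (volume : Measure I01) J ^ ((1:ℝ)/2)).toReal = (K * ε) * bR := by
    rw [ENNReal.toReal_mul, ENNReal.coe_toReal, coe_nnnorm, Complex.norm_real,
      Real.norm_eq_abs, abs_of_nonneg (by positivity), hbRdef]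
  have hchain : c * (aR * bR) ≤ ‖Q‖ * ((K * ε) * bR) := by
    rw [hlhs]
    calc ((‖((c : ℝ) : ℂ)‖₊ : ENNReal)
        * ((volume : Measure I01) U * (volume : Measure I01) J) ^ ((1:ℝ)/2)).toReal
        ≤ ‖u‖ := hu_norm
      _ ≤ ‖Q‖ * ‖P u‖ := hbound u
      _ ≤ ‖Q‖ * ((K * ε) * bR) := by
          apply mul_le_mul_of_nonneg_left _ (norm_nonneg Q)
          rw [← hrhs]
          exact hPu_norm
  have hfinal : c * aR ≤ ‖Q‖ * (K * ε) := by
    have := hchain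
    rw [show c * (aR * bR) = (c * aR) * bR by ring,
      show ‖Q‖ * ((K * ε) * bR) = (‖Q‖ * (K * ε)) * bR by ring] at this
    exact le_of_mul_le_mul_right this hbR
  have hcontra : ‖Q‖ * (K * ε) < c * aR := by
    rw [hεdef]
    have h1 : ‖Q‖ * K < ‖Q‖ * K + 1 := by linarith
    have h2 : 0 < ‖Q‖ * K + 1 := by positivity
    rw [show ‖Q‖ * (K * (c * aR / (‖Q‖ * K + 1)))
      = (‖Q‖ * K) * (c * aR) / (‖Q‖ * K + 1) by ring]
    rw [div_lt_iff₀ h2]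
    calc (‖Q‖ * K) * (c * aR) < (‖Q‖ * K + 1) * (c * aR) := by
          apply mul_lt_mul_of_pos_right h1 (mul_pos hc haR)
      _ = c * aR * (‖Q‖ * K + 1) := by ring
  linarith
end
end
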